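/- Factorial property of represented strings (Theorem 3.1(ii)): for any strings T, w, v over the alphabet A, if w is represented in T and v is a contiguous substring (infix) of w, then v is represented in T. -/

import Mathlib

/-- `w` occurs in `T` at the (1-indexed) position `p`, i.e. `1 ≤ p ≤ |T| - |w| + 1`
and `T[p..p+|w|-1] = w`. -/
def OccursAt {A : Type*} (T w : List A) (p : ℕ) : Prop :=
  1 ≤ p ∧ p + w.length ≤ T.length + 1 ∧ (T.drop (p - 1)).take w.length = w

/-- `w` is represented in `T`: there are positions `p 1 < p 2 < ... < p |w|` such that
for each `1 ≤ ℓ ≤ |w|`, the prefix `w[1..ℓ]` occurs in `T` at position `p ℓ`. -/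
def Represented {A : Type*} (T w : List A) : Prop :=
  ∃ p : ℕ → ℕ,
    (∀ i j, 1 ≤ i → i < j → j ≤ w.length → p i < p j) ∧
    (∀ ℓ, 1 ≤ ℓ → ℓ ≤ w.length → OccursAt T (w.take ℓ) (p ℓ))

/-- Factorial property of represented strings (Theorem 3.1(ii)): if `w` is represented
in `T` and `v` is an infix (contiguous substring) of `w`, then `v` is represented in `T`. -/
theorem represented_of_infix {A : Type*} (T w v : List A)
    (hw : Represented T w) (hv : v <:+: w) : Represented T v := by
  obtain ⟨s, t, hst⟩ := hv
  obtain ⟨p, hmono, hocc⟩ := hw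
  have hwlen : w.length = s.length + v.length + t.length := by
    subst hst; simp; omega
  refine ⟨fun ℓ => p (s.length + ℓ) + s.length, ?_, ?_⟩
  · intro i j hi hij hj
    simp only []
    have := hmono (s.length + i) (s.length + j) (by omega) (by omega) (by omega)
    omega
  · intro ℓ h1 h2
    have hocc' := hocc (s.length + ℓ) (by omega) (by omega)
    have htake : w.take (s.length + ℓ) = s ++ v.take ℓ := by
      subst hst
      rw [List.append_assoc, List.take_append]
      simp [List.take_append_of_le_length h2]
    rw [htake] at hocc'
    obtain ⟨hp1, hp2, hp3⟩ := hocc'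
    show OccursAt T (v.take ℓ) (p (s.length + ℓ) + s.length)
    refine ⟨by omega, ?_, ?_⟩
    · simp only [List.length_append, List.length_take] at hp2 ⊢; omega
    · have hd : ((T.drop (p (s.length + ℓ) - 1)).take (s ++ v.take ℓ).length).drop
          s.length = v.take ℓ := by
        rw [hp3, List.drop_left]
      rw [List.drop_take, List.drop_drop] at hd
      simp only [List.length_append] at hd
      have he : p (s.length + ℓ) + s.length - 1 = p (s.length + ℓ) - 1 + s.length := by
        omega
      rw [he]
      convert hd using 2
      omega
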